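/- arXiv:2409.14790 — 3 statements merged into one kernel-verified Lean document; each statement's English description precedes it below -/
import Mathlib

section
/- Let x ∈ ℂ^n with Nx ≠ 0. Then qf_x(μ) → rq_{M,N}(x) as |μ| → ∞ in ℂ; that is, the limit of the quotient function at infinity is the Rayleigh quotient. -/
open Matrix Filter Topology
open scoped ComplexOrder

noncomputable def innerP {n : ℕ} (P : Matrix (Fin n) (Fin n) ℂ) (x y : Fin n → ℂ) : ℂ :=
  star y ⬝ᵥ P.mulVec x

noncomputable def normP {n : ℕ} (P : Matrix (Fin n) (Fin n) ℂ) (x : Fin n → ℂ) : ℝ :=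
  Real.sqrt (innerP P x x).re

noncomputable def rq {n : ℕ} (M N P : Matrix (Fin n) (Fin n) ℂ) (x : Fin n → ℂ) : ℂ :=
  innerP P (M.mulVec x) (N.mulVec x) / innerP P (N.mulVec x) (N.mulVec x)

noncomputable def r0 {n : ℕ} (M N P : Matrix (Fin n) (Fin n) ℂ) (x : Fin n → ℂ) : ℝ :=
  normP P (M.mulVec x - rq M N P x • N.mulVec x) / normP P (N.mulVec x)

noncomputable def qf {n : ℕ} (M N P : Matrix (Fin n) (Fin n) ℂ) (x : Fin n → ℂ) (μ : ℂ) : ℂ :=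
  (innerP P ((M - μ • N).mulVec x) (N.mulVec x) /
      ((‖innerP P ((M - μ • N).mulVec x) (N.mulVec x)‖ : ℝ) : ℂ)) *
    ((normP P ((M - μ • N).mulVec x) / normP P (N.mulVec x) : ℝ) : ℂ) + μ

def genSpec {n : ℕ} (M N : Matrix (Fin n) (Fin n) ℂ) : Set ℂ :=
  {l : ℂ | (M - l • N).det = 0}

lemma innerP_sub_smul_left {n : ℕ} (P : Matrix (Fin n) (Fin n) ℂ) (u v w : Fin n → ℂ) (c : ℂ) :
    innerP P (u - c • v) w = innerP P u w - c * innerP P v w := by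
  simp [innerP, Matrix.mulVec_sub, Matrix.mulVec_smul, dotProduct_sub, dotProduct_smul,
    smul_eq_mul]

lemma innerP_sub_smul_right {n : ℕ} (P : Matrix (Fin n) (Fin n) ℂ) (u v w : Fin n → ℂ) (c : ℂ) :
    innerP P u (v - c • w) = innerP P u v - star c * innerP P u w := by
  simp [innerP, sub_dotProduct, smul_dotProduct, star_smul, smul_eq_mul]

lemma innerP_conj {n : ℕ} {P : Matrix (Fin n) (Fin n) ℂ} (hP : P.IsHermitian)
    (u v : Fin n → ℂ) : star (innerP P u v) = innerP P v u := by
  simp only [innerP]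
  rw [star_dotProduct, star_star, star_mulVec, hP.eq, ← dotProduct_mulVec]


lemma innerP_expand {n : ℕ} {P : Matrix (Fin n) (Fin n) ℂ} (hP : P.IsHermitian)
    (u v : Fin n → ℂ) (c d : ℂ) :
    innerP P (u - c • v) (u - d • v) =
      innerP P u u - star d * innerP P u v - c * star (innerP P u v)
        + c * star d * innerP P v v := by
  rw [innerP_sub_smul_left, innerP_sub_smul_right, innerP_sub_smul_right,
    ← innerP_conj hP u v]
  ring

lemma key_re {n : ℕ} {P : Matrix (Fin n) (Fin n) ℂ} (hP : P.IsHermitian)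
    (u v : Fin n → ℂ) (ρ μ : ℂ) (hB : (innerP P v v).im = 0)
    (hC : innerP P u v = ρ * innerP P v v) :
    (innerP P (u - μ • v) (u - μ • v)).re =
      (innerP P (u - ρ • v) (u - ρ • v)).re
        + ‖ρ - μ‖ ^ 2 * (innerP P v v).re := by
  rw [innerP_expand hP, innerP_expand hP, hC, Complex.sq_norm, Complex.normSq_apply]
  simp only [Complex.add_re, Complex.sub_re, Complex.mul_re, Complex.mul_im,
    Complex.star_def, Complex.conj_re, Complex.conj_im, Complex.sub_im, Complex.add_im, hB]
  ring

lemma normP_sq {n : ℕ} {P : Matrix (Fin n) (Fin n) ℂ} (hP : P.PosDef) (w : Fin n → ℂ) :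
    normP P w ^ 2 = (innerP P w w).re := by
  have h : (0 : ℂ) ≤ innerP P w w := hP.posSemidef.dotProduct_mulVec_nonneg w
  have : 0 ≤ (innerP P w w).re := by
    rw [Complex.le_def] at h; exact h.1
  exact Real.sq_sqrt this

/-- the quotient function tends to the Rayleigh quotient at infinity. -/
theorem stmt_2 {n : ℕ} (hn : 1 ≤ n) (M N P : Matrix (Fin n) (Fin n) ℂ)
    (hP : P.PosDef) (x : Fin n → ℂ) (hx : N.mulVec x ≠ 0) :
    Tendsto (fun μ : ℂ => qf M N P x μ) (Bornology.cobounded ℂ) (𝓝 (rq M N P x)) := by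
  set a := M.mulVec x with ha
  set b := N.mulVec x with hb
  set ρ := rq M N P x with hρ
  have hBlt : (0 : ℂ) < innerP P b b := hP.dotProduct_mulVec_pos hx
  have hBre : 0 < (innerP P b b).re := by rw [Complex.lt_def] at hBlt; exact hBlt.1
  have hBim : (innerP P b b).im = 0 := by rw [Complex.lt_def] at hBlt; exact hBlt.2.symm
  have hB0 : innerP P b b ≠ 0 := ne_of_gt hBlt
  have hBcast : innerP P b b = (((innerP P b b).re : ℝ) : ℂ) := by
    exact Complex.ext rfl (by simp [hBim])
  have hC : innerP P a b = ρ * innerP P b b := by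
    rw [hρ, rq]; exact (div_mul_cancel₀ _ hB0).symm
  have hnb : 0 < normP P b := Real.sqrt_pos.mpr hBre
  have hnbsq : normP P b ^ 2 = (innerP P b b).re := normP_sq hP b
  set r := r0 M N P x with hr
  have hr0 : 0 ≤ r := div_nonneg (Real.sqrt_nonneg _) (le_of_lt hnb)
  -- the main estimate
  have hEst : ∀ μ : ℂ, ρ ≠ μ →
      ‖qf M N P x μ - ρ‖ ≤ r ^ 2 / (2 * ‖ρ - μ‖) := by
    intro μ hne
    set t := ‖ρ - μ‖ with htd
    have ht : 0 < t := by
      rw [htd]; exact norm_pos_iff.mpr (sub_ne_zero.mpr hne)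
    have hmv : (M - μ • N).mulVec x = a - μ • b := by
      rw [Matrix.sub_mulVec, Matrix.smul_mulVec]
    set s := normP P (a - μ • b) / normP P b with hsd
    have hs0 : 0 ≤ s := div_nonneg (Real.sqrt_nonneg _) (le_of_lt hnb)
    have hpyth : normP P (a - μ • b) ^ 2 = normP P (a - ρ • b) ^ 2 + t ^ 2 * normP P b ^ 2 := by
      rw [normP_sq hP, normP_sq hP, hnbsq, key_re hP.1 a b ρ μ hBim hC]
    have hssq : s ^ 2 = r ^ 2 + t ^ 2 := by
      rw [hsd, div_pow, hpyth, hr, r0, div_pow]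
      field_simp
      have hnb2 : normP P b ^ 2 ≠ 0 := by positivity
      change _ = normP P b ^ 2 * (normP P (a - ρ • b) ^ 2 / normP P b ^ 2 + t ^ 2)
      rw [mul_add, ← mul_div_assoc, mul_div_cancel_left₀ _ hnb2]; ring
    have hst : t ≤ s := by nlinarith [sq_nonneg r, sq_nonneg (s + t)]
    have hcμ : innerP P (a - μ • b) b = (ρ - μ) * innerP P b b := by
      rw [innerP_sub_smul_left, hC]; ring
    have habs : (‖(ρ - μ) * innerP P b b‖ : ℝ) =
        t * (innerP P b b).re := by
      rw [norm_mul, htd]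
      congr 1
      rw [hBcast, Complex.norm_real, Real.norm_eq_abs, abs_of_pos hBre]
      simp
    have hqf : qf M N P x μ - ρ = (ρ - μ) * (((s - t) / t : ℝ) : ℂ) := by
      rw [qf, hmv]
      simp only [← hb]
      rw [hcμ, habs, ← hsd]
      push_cast
      have htne : (t : ℂ) ≠ 0 := by exact_mod_cast ne_of_gt ht
      have hBne : (((innerP P b b).re : ℝ) : ℂ) ≠ 0 := by exact_mod_cast ne_of_gt hBre
      rw [hBcast]
      simp only [Complex.ofReal_re]
      field_simp
      ring
    rw [hqf]
    have hnorm : ‖(ρ - μ) * (((s - t) / t : ℝ) : ℂ)‖ = s - t := by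
      rw [norm_mul, Complex.norm_real, Real.norm_eq_abs, ← htd,
        abs_of_nonneg (div_nonneg (by linarith) ht.le), mul_comm,
        div_mul_cancel₀ _ (ne_of_gt ht)]
    rw [hnorm, le_div_iff₀ (by positivity)]
    nlinarith [sq_nonneg (s - t)]
  -- squeeze
  rw [tendsto_iff_norm_sub_tendsto_zero]
  have hev : ∀ᶠ μ : ℂ in Bornology.cobounded ℂ, ρ ≠ μ := by
    filter_upwards [tendsto_norm_cobounded_atTop.eventually_gt_atTop ‖ρ‖] with μ h
    intro contra; rw [contra] at h; exact lt_irrefl _ h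
  have htt : Tendsto (fun μ : ℂ => ‖ρ - μ‖) (Bornology.cobounded ℂ) atTop := by
    apply tendsto_atTop_mono (fun μ : ℂ => ?_)
      (tendsto_atTop_add_const_right _ (-‖ρ‖) tendsto_norm_cobounded_atTop)
    calc ‖μ‖ + -‖ρ‖ ≤ ‖μ - ρ‖ := by
          have := norm_sub_norm_le μ ρ; linarith
      _ = ‖ρ - μ‖ := by rw [norm_sub_rev]
  have hg : Tendsto (fun μ : ℂ => r ^ 2 / (2 * ‖ρ - μ‖))
      (Bornology.cobounded ℂ) (𝓝 0) := by
    have : Tendsto (fun μ : ℂ => 2 * ‖ρ - μ‖) (Bornology.cobounded ℂ) atTop :=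
      (tendsto_const_mul_atTop_of_pos (by norm_num : (0:ℝ) < 2)).mpr htt
    simpa using Tendsto.div_atTop tendsto_const_nhds this
  apply squeeze_zero' (by filter_upwards with μ using norm_nonneg _)
    (by filter_upwards [hev] with μ h using hEst μ h) hg
end

section
/- Let x ∈ ℂ^n with Nx ≠ 0. The quotient function qf_x is constant on ℂ ∖ {rq_{M,N}(x)} if and only if Mx = rq_{M,N}(x)·Nx (i.e., x is an eigenvector of the pencil); in that case its constant value equals the eigenvalue rq_{M,N}(x). -/
open Matrix Filter Topology
open scoped ComplexOrder

section helpers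
variable {n : ℕ} (P : Matrix (Fin n) (Fin n) ℂ) (x x' y : Fin n → ℂ) (a : ℂ)

lemma innerP_add_left : innerP P (x + x') y = innerP P x y + innerP P x' y := by
  simp [innerP, Matrix.mulVec_add, dotProduct_add]

lemma innerP_sub_left : innerP P (x - x') y = innerP P x y - innerP P x' y := by
  simp [innerP, Matrix.mulVec_sub, dotProduct_sub]

lemma innerP_smul_left : innerP P (a • x) y = a * innerP P x y := by
  simp [innerP, Matrix.mulVec_smul, dotProduct_smul, smul_eq_mul]

lemma innerP_add_right : innerP P x (y + x') = innerP P x y + innerP P x x' := by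
  simp [innerP, add_dotProduct, star_add]

lemma innerP_smul_right : innerP P x (a • y) = star a * innerP P x y := by
  simp [innerP, star_smul, smul_dotProduct, smul_eq_mul]

lemma innerP_conj_s4 (hP : P.IsHermitian) : innerP P y x = star (innerP P x y) := by
  rw [innerP, innerP, star_dotProduct, star_mulVec, hP.eq,
    ← Matrix.dotProduct_mulVec]

lemma innerP_self (hP : P.PosDef) (hy : y ≠ 0) :
    innerP P y y = ((innerP P y y).re : ℂ) ∧ 0 < (innerP P y y).re := by
  have h : 0 < innerP P y y := hP.dotProduct_mulVec_pos hy
  obtain ⟨h1, h2⟩ := Complex.lt_def.mp h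
  have h2' : (innerP P y y).im = 0 := by simpa using h2.symm
  exact ⟨Complex.ext (by simp) (by simp [h2']), by simpa using h1⟩

end helpers

section main
variable {n : ℕ} (M N P : Matrix (Fin n) (Fin n) ℂ) (x : Fin n → ℂ)

lemma innerP_res (hP : P.PosDef) (hx : N.mulVec x ≠ 0) :
    innerP P (M.mulVec x - rq M N P x • N.mulVec x) (N.mulVec x) = 0 := by
  have hd : innerP P (N.mulVec x) (N.mulVec x) ≠ 0 := (hP.dotProduct_mulVec_pos hx).ne'
  rw [innerP_sub_left, innerP_smul_left, rq]
  field_simp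
  ring

lemma qf_eq (hP : P.PosDef) (hx : N.mulVec x ≠ 0) (μ : ℂ) (hμ : μ ≠ rq M N P x) :
    qf M N P x μ =
      ((rq M N P x - μ) / ((‖rq M N P x - μ‖ : ℝ) : ℂ)) *
        ((Real.sqrt ((innerP P (M.mulVec x - rq M N P x • N.mulVec x)
              (M.mulVec x - rq M N P x • N.mulVec x)).re
            + ‖rq M N P x - μ‖ ^ 2 * (innerP P (N.mulVec x) (N.mulVec x)).re) /
          Real.sqrt ((innerP P (N.mulVec x) (N.mulVec x)).re) : ℝ) : ℂ) + μ := by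
  set v := N.mulVec x with hv
  set r := rq M N P x with hrdef
  set w := M.mulVec x - r • v with hwdef
  set s := r - μ with hsdef
  have hs : s ≠ 0 := sub_ne_zero.mpr (fun h => hμ h.symm)
  have hsa : ‖s‖ ≠ 0 := by simpa using hs
  obtain ⟨hdD, hD⟩ := innerP_self P v hP hx
  set D := (innerP P v v).re with hDdef
  have hDne : D ≠ 0 := ne_of_gt hD
  have horth : innerP P w v = 0 := innerP_res M N P x hP hx
  have hvec : (M - μ • N).mulVec x = w + s • v := by
    rw [Matrix.sub_mulVec, Matrix.smul_mulVec, hwdef, hsdef]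
    module
  have hcc : innerP P ((M - μ • N).mulVec x) v = s * (D : ℂ) := by
    rw [hvec, innerP_add_left, innerP_smul_left, horth, hdD]; ring
  have habs : (‖innerP P ((M - μ • N).mulVec x) v‖ : ℝ) = ‖s‖ * D := by
    rw [hcc, norm_mul, Complex.norm_real, Real.norm_of_nonneg hD.le]
  have hsq : ((‖s‖ ^ 2 : ℝ) : ℂ) = star s * s := by
    rw [Complex.star_def, mul_comm, Complex.mul_conj, ← Complex.sq_norm]
  have hself : innerP P ((M - μ • N).mulVec x) ((M - μ • N).mulVec x)
      = innerP P w w + ((‖s‖ ^ 2 * D : ℝ) : ℂ) := by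
    rw [hvec]
    simp only [innerP_add_left, innerP_add_right, innerP_smul_left, innerP_smul_right,
      innerP_conj_s4 P w v hP.1, horth, star_zero, mul_zero, add_zero, zero_add]
    rw [hdD, Complex.ofReal_mul, hsq]
    ring
  have hnorm1 : normP P ((M - μ • N).mulVec x)
      = Real.sqrt ((innerP P w w).re + ‖s‖ ^ 2 * D) := by
    rw [normP, hself, Complex.add_re, Complex.ofReal_re]
  have hnorm2 : normP P v = Real.sqrt D := rfl
  have key : (s * (D:ℂ)) / ((‖s‖ * D : ℝ) : ℂ) = s / ((‖s‖ : ℝ) : ℂ) := by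
    push_cast
    rw [div_eq_div_iff (by exact_mod_cast mul_ne_zero hsa hDne) (by exact_mod_cast hsa)]
    ring
  rw [qf, hcc, norm_mul, Complex.norm_real, Real.norm_of_nonneg hD.le, hnorm1, hnorm2, key]

lemma innerP_zero : innerP P (0 : Fin n → ℂ) 0 = 0 := by
  simp [innerP]

lemma eigen_qf (hP : P.PosDef) (hx : N.mulVec x ≠ 0)
    (h : M.mulVec x = rq M N P x • N.mulVec x) :
    ∀ μ : ℂ, μ ≠ rq M N P x → qf M N P x μ = rq M N P x := by
  intro μ hμ
  rw [qf_eq M N P x hP hx μ hμ]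
  set r := rq M N P x with hrdef
  set s := r - μ with hsdef
  have hs : s ≠ 0 := sub_ne_zero.mpr (fun hh => hμ hh.symm)
  have hsa : (0:ℝ) < ‖s‖ := by
    simpa [AbsoluteValue.pos_iff] using hs
  obtain ⟨hdD, hD⟩ := innerP_self P (N.mulVec x) hP hx
  set D := (innerP P (N.mulVec x) (N.mulVec x)).re with hDdef
  have hw0 : M.mulVec x - r • N.mulVec x = 0 := sub_eq_zero_of_eq h
  rw [hw0, innerP_zero, Complex.zero_re, zero_add,
    Real.sqrt_mul (sq_nonneg _), Real.sqrt_sq (norm_nonneg s)]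
  have hsD : Real.sqrt D ≠ 0 := (Real.sqrt_pos.mpr hD).ne'
  rw [mul_div_assoc, div_self hsD, mul_one,
    div_mul_cancel₀ _ (show ((‖s‖ : ℝ) : ℂ) ≠ 0 by exact_mod_cast hsa.ne')]
  rw [hsdef]; ring


/-- the quotient function is constant on `ℂ \ {rq}` iff `x` is an
eigenvector, in which case the constant value is the Rayleigh quotient. -/
theorem stmt_4 {n : ℕ} (hn : 1 ≤ n) (M N P : Matrix (Fin n) (Fin n) ℂ)
    (hP : P.PosDef) (x : Fin n → ℂ) (hx : N.mulVec x ≠ 0) :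
    ((∃ c : ℂ, ∀ μ : ℂ, μ ≠ rq M N P x → qf M N P x μ = c) ↔
        M.mulVec x = rq M N P x • N.mulVec x) ∧
      (M.mulVec x = rq M N P x • N.mulVec x →
        ∀ μ : ℂ, μ ≠ rq M N P x → qf M N P x μ = rq M N P x) := by
  refine ⟨⟨?_, fun h => ⟨rq M N P x, eigen_qf M N P x hP hx h⟩⟩, eigen_qf M N P x hP hx⟩
  rintro ⟨c, hc⟩
  set r := rq M N P x with hrdef
  obtain ⟨hdD, hD⟩ := innerP_self P (N.mulVec x) hP hx
  set D := (innerP P (N.mulVec x) (N.mulVec x)).re with hDdef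
  set A := (innerP P (M.mulVec x - r • N.mulVec x) (M.mulVec x - r • N.mulVec x)).re with hAdef
  have hA : 0 ≤ A := by
    have h0 := hP.posSemidef.dotProduct_mulVec_nonneg (M.mulVec x - r • N.mulVec x)
    simpa [hAdef, innerP] using (Complex.le_def.mp h0).1
  have hne1 : (r + 1 : ℂ) ≠ r := by simp
  have hne2 : (r + 2 : ℂ) ≠ r := by simp
  have h1 := hc (r+1) hne1
  have h2 := hc (r+2) hne2
  rw [qf_eq M N P x hP hx _ hne1, show r - (r+1) = (-1 : ℂ) by ring] at h1
  rw [qf_eq M N P x hP hx _ hne2, show r - (r+2) = (-2 : ℂ) by ring] at h2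
  norm_num at h1 h2
  rw [← hrdef] at h1 h2
  rw [show (innerP P (M *ᵥ x - r • N *ᵥ x) (M *ᵥ x - r • N *ᵥ x)).re = A from hAdef.symm,
    show (innerP P (N *ᵥ x) (N *ᵥ x)).re = D from hDdef.symm] at h1 h2
  have hre : Real.sqrt (A + 4*D)/Real.sqrt D - Real.sqrt (A + D)/Real.sqrt D = 1 := by
    have hcc : ((Real.sqrt (A + 4*D)/Real.sqrt D - Real.sqrt (A + D)/Real.sqrt D : ℝ) : ℂ) = 1 := by
      push_cast
      linear_combination h1 - h2
    exact_mod_cast hcc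
  have hsD : 0 < Real.sqrt D := Real.sqrt_pos.mpr hD
  have hs1 : Real.sqrt (A + D)^2 = A + D := Real.sq_sqrt (by linarith)
  have hs2 : Real.sqrt (A + 4*D)^2 = A + 4*D := Real.sq_sqrt (by linarith)
  have hd2 : Real.sqrt D^2 = D := Real.sq_sqrt hD.le
  have h4 : Real.sqrt (A + 4*D) = Real.sqrt (A + D) + Real.sqrt D := by
    rw [div_sub_div_same, div_eq_one_iff_eq hsD.ne'] at hre
    linarith
  have h6 : A + 4*D = (Real.sqrt (A + D) + Real.sqrt D)^2 := by rw [← h4, hs2]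
  have hac : Real.sqrt (A + D) * Real.sqrt D = D := by nlinarith [h6, hs1, hd2]
  have h5 : (A + D) * D = D^2 := by
    have h6 := congrArg (· ^ 2) hac
    simp only [mul_pow, hs1, hd2] at h6
    simpa using h6
  have hAD0 : A * D = 0 := by nlinarith
  have hA0 : A = 0 := by
    rcases mul_eq_zero.mp hAD0 with h' | h'
    · exact h'
    · exact absurd h' hD.ne'
  have hw : M *ᵥ x - r • N *ᵥ x = 0 := by
    by_contra hne
    have hpos : 0 < A := by
      have h7 := (innerP_self P (M *ᵥ x - r • N *ᵥ x) hP hne).2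
      rw [← hAdef] at h7
      exact h7
    exact absurd hA0 hpos.ne'
  exact sub_eq_zero.mp hw

end main
end

section
/- Assume the pencil (M,N) is self-adjoint with respect to P, N is invertible, and every λ ∈ Λ(M,N) is real with λ ≥ 0; let λₙ = max Λ(M,N). Let x ≠ 0 and define for μ ∈ ℝ the Algorithm-2 update α(μ) = μ + ‖(M−μN)x‖_P/‖Nx‖_P, and set μ₀ = ‖Mx‖_P/(2‖Nx‖_P) and μ₁ = α(μ₀)/2. Then μ₀ ≤ μ₁ and α(μ₀) ≤ α(μ₁) ≤ λₙ; moreover, if μ₀ ≠ rq_{M,N}(x), then qf_x(μ₀) ≤ α(μ₀), and hence 0 ≤ λₙ − α(μ₁) ≤ λₙ − qf_x(μ₀): one iteration of the midpoint update does not worsen, and is bounded above by λₙ as an underestimate. -/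
open Matrix Filter Topology
open scoped ComplexOrder

noncomputable def nrm {n : ℕ} (w : Fin n → ℂ) : ℝ := Real.sqrt (star w ⬝ᵥ w).re

lemma re_dot {n : ℕ} (w : Fin n → ℂ) : (star w ⬝ᵥ w).re = ∑ i, ‖w i‖ ^ 2 := by
  simp only [dotProduct, Pi.star_apply, Complex.re_sum]
  refine Finset.sum_congr rfl fun i _ => ?_
  rw [RCLike.star_def, mul_comm, Complex.mul_conj']
  norm_cast

lemma nrm_eq_sqrt_sum {n : ℕ} (w : Fin n → ℂ) : nrm w = Real.sqrt (∑ i, ‖w i‖ ^ 2) := by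
  rw [nrm, re_dot]

lemma nrm_nonneg {n : ℕ} (w : Fin n → ℂ) : 0 ≤ nrm w := Real.sqrt_nonneg _

lemma nrm_eq_norm {n : ℕ} (w : Fin n → ℂ) :
    nrm w = ‖(WithLp.equiv 2 (Fin n → ℂ)).symm w‖ := by
  rw [nrm_eq_sqrt_sum, EuclideanSpace.norm_eq]
  rfl

lemma nrm_add_le {n : ℕ} (w z : Fin n → ℂ) : nrm (w + z) ≤ nrm w + nrm z := by
  simp only [nrm_eq_norm]
  rw [show (WithLp.equiv 2 (Fin n → ℂ)).symm (w + z)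
      = (WithLp.equiv 2 (Fin n → ℂ)).symm w + (WithLp.equiv 2 (Fin n → ℂ)).symm z from rfl]
  exact norm_add_le _ _

lemma nrm_smul {n : ℕ} (r : ℝ) (w : Fin n → ℂ) : nrm ((r : ℂ) • w) = |r| * nrm w := by
  rw [nrm_eq_sqrt_sum, nrm_eq_sqrt_sum]
  have h : ∀ i, ‖((r : ℂ) • w) i‖ ^ 2 = |r| ^ 2 * ‖w i‖ ^ 2 := by
    intro i
    simp [norm_smul, mul_pow, Complex.norm_real, Real.norm_eq_abs]
  rw [Finset.sum_congr rfl fun i _ => h i, ← Finset.mul_sum,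
    Real.sqrt_mul (sq_nonneg _), Real.sqrt_sq_eq_abs, abs_abs]

lemma nrm_pos {n : ℕ} {w : Fin n → ℂ} (hw : w ≠ 0) : 0 < nrm w := by
  rw [nrm_eq_sqrt_sum]
  apply Real.sqrt_pos.mpr
  obtain ⟨i, hi⟩ := Function.ne_iff.mp hw
  refine Finset.sum_pos' (fun j _ => sq_nonneg _) ⟨i, Finset.mem_univ i, ?_⟩
  exact pow_pos (norm_pos_iff.mpr hi) 2

lemma nrm_mulVec_unitary {n : ℕ} (U : Matrix (Fin n) (Fin n) ℂ) (hU : Uᴴ * U = 1)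
    (w : Fin n → ℂ) : nrm (U *ᵥ w) = nrm w := by
  unfold nrm
  rw [Matrix.star_mulVec, Matrix.dotProduct_mulVec, Matrix.vecMul_vecMul, hU, Matrix.vecMul_one]

lemma herm_shift {n : ℕ} {T : Matrix (Fin n) (Fin n) ℂ} (hT : T.IsHermitian) (μ : ℝ) :
    T - (μ : ℂ) • 1 = (hT.eigenvectorUnitary : Matrix (Fin n) (Fin n) ℂ) *
      Matrix.diagonal (fun i => ((hT.eigenvalues i - μ : ℝ) : ℂ)) *
      (star hT.eigenvectorUnitary : Matrix (Fin n) (Fin n) ℂ) := by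
  set U := (hT.eigenvectorUnitary : Matrix (Fin n) (Fin n) ℂ) with hUdef
  have hU2 : U * star U = 1 := Matrix.mem_unitaryGroup_iff.mp hT.eigenvectorUnitary.2
  have h1 : U * ((μ : ℂ) • 1) * star U = (μ : ℂ) • 1 := by
    rw [Matrix.mul_smul, Matrix.smul_mul, Matrix.mul_one, hU2]
  conv_lhs => rw [hT.spectral_theorem, Unitary.conjStarAlgAut_apply, ← h1]
  rw [← Matrix.sub_mul, ← Matrix.mul_sub]
  rw [Matrix.smul_one_eq_diagonal, Matrix.diagonal_sub]
  have h2 : (fun i => (RCLike.ofReal ∘ hT.eigenvalues) i - (μ : ℂ))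
      = fun i => ((hT.eigenvalues i - μ : ℝ) : ℂ) := by
    funext i; simp [Function.comp]
  rw [h2]

lemma nrm_shift_le {n : ℕ} {T : Matrix (Fin n) (Fin n) ℂ} (hT : T.IsHermitian) (c μ : ℝ)
    (hc : 0 ≤ c) (hb : ∀ i, |hT.eigenvalues i - μ| ≤ c) (v : Fin n → ℂ) :
    nrm ((T - (μ : ℂ) • 1) *ᵥ v) ≤ c * nrm v := by
  set U := (hT.eigenvectorUnitary : Matrix (Fin n) (Fin n) ℂ) with hUdef
  have hU1 : Uᴴ * U = 1 := Matrix.mem_unitaryGroup_iff'.mp hT.eigenvectorUnitary.2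
  have hU2 : U * Uᴴ = 1 := Matrix.mem_unitaryGroup_iff.mp hT.eigenvectorUnitary.2
  have hs : star U = Uᴴ := rfl
  rw [herm_shift hT μ, hs, ← Matrix.mulVec_mulVec, ← Matrix.mulVec_mulVec,
    nrm_mulVec_unitary U hU1]
  have hv : nrm v = nrm (Uᴴ *ᵥ v) := by
    rw [nrm_mulVec_unitary Uᴴ (by rw [Matrix.conjTranspose_conjTranspose, hU2]) v]
  rw [hv]
  set w := Uᴴ *ᵥ v
  rw [nrm_eq_sqrt_sum, nrm_eq_sqrt_sum]
  have hterm : ∀ i : Fin n,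
      ‖(Matrix.diagonal (fun i => ((hT.eigenvalues i - μ : ℝ) : ℂ)) *ᵥ w) i‖ ^ 2
        ≤ c ^ 2 * ‖w i‖ ^ 2 := by
    intro i
    rw [Matrix.mulVec_diagonal, norm_mul, mul_pow, Complex.norm_real, Real.norm_eq_abs]
    exact mul_le_mul_of_nonneg_right
      (pow_le_pow_left₀ (abs_nonneg _) (hb i) 2) (sq_nonneg _)
  calc Real.sqrt (∑ i, ‖(Matrix.diagonal (fun i => ((hT.eigenvalues i - μ : ℝ) : ℂ)) *ᵥ w) i‖ ^ 2)
      ≤ Real.sqrt (∑ i, c ^ 2 * ‖w i‖ ^ 2) :=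
        Real.sqrt_le_sqrt (Finset.sum_le_sum fun i _ => hterm i)
    _ = c * Real.sqrt (∑ i, ‖w i‖ ^ 2) := by
        rw [← Finset.mul_sum, Real.sqrt_mul (sq_nonneg _), Real.sqrt_sq hc]

lemma det_shift_eq_zero {n : ℕ} {T : Matrix (Fin n) (Fin n) ℂ} (hT : T.IsHermitian) (i : Fin n) :
    (T - ((hT.eigenvalues i : ℝ) : ℂ) • 1).det = 0 := by
  have h0 : (Matrix.diagonal
      (fun j => ((hT.eigenvalues j - hT.eigenvalues i : ℝ) : ℂ))).det = 0 := by
    rw [Matrix.det_diagonal]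
    exact Finset.prod_eq_zero (Finset.mem_univ i) (by simp)
  rw [herm_shift hT, Matrix.det_mul, Matrix.det_mul, h0, mul_zero, zero_mul]

section
open scoped MatrixOrder
lemma exists_sqrt_herm {n : ℕ} {P : Matrix (Fin n) (Fin n) ℂ} (hP : P.PosSemidef) :
    ∃ L : Matrix (Fin n) (Fin n) ℂ, Lᴴ = L ∧ L * L = P :=
  ⟨CFC.sqrt P, (CFC.sqrt_nonneg P).posSemidef.1, CFC.sqrt_mul_sqrt_self P hP.nonneg⟩
end

/-- The Algorithm-2 update `α(μ) = μ + ‖(M−μN)x‖_P/‖Nx‖_P`. -/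
noncomputable def alg2 {n : ℕ} (M N P : Matrix (Fin n) (Fin n) ℂ)
    (x : Fin n → ℂ) (μ : ℝ) : ℝ :=
  μ + normP P ((M - (μ : ℂ) • N).mulVec x) / normP P (N.mulVec x)

/-- one iteration of the midpoint update of Algorithm 2 does not worsen the
estimate and remains an underestimate of `λₙ`. -/
theorem stmt_12 {n : ℕ} (hn : 1 ≤ n) (M N P : Matrix (Fin n) (Fin n) ℂ)
    (hP : P.PosDef) (hsa : (Nᴴ * P * M).IsHermitian) (hN : IsUnit N)
    (hpos : ∀ l ∈ genSpec M N, l.im = 0 ∧ 0 ≤ l.re)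
    (lamn : ℝ) (hlamn : IsGreatest {l : ℝ | (l : ℂ) ∈ genSpec M N} lamn)
    (x : Fin n → ℂ) (hx : x ≠ 0)
    (μ0 μ1 : ℝ)
    (hμ0 : μ0 = normP P (M.mulVec x) / (2 * normP P (N.mulVec x)))
    (hμ1 : μ1 = alg2 M N P x μ0 / 2) :
    μ0 ≤ μ1 ∧
    alg2 M N P x μ0 ≤ alg2 M N P x μ1 ∧
    alg2 M N P x μ1 ≤ lamn ∧
    ((μ0 : ℂ) ≠ rq M N P x →
      (qf M N P x μ0).re ≤ alg2 M N P x μ0 ∧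
      0 ≤ lamn - alg2 M N P x μ1 ∧
      lamn - alg2 M N P x μ1 ≤ lamn - (qf M N P x μ0).re) := by
  classical
  have hPsd := hP.posSemidef
  obtain ⟨L, hLH, hLL⟩ := exists_sqrt_herm hPsd
  have hPdet : IsUnit P.det := hP.det_pos.ne'.isUnit
  have hLdet : IsUnit L.det := by
    refine isUnit_of_mul_isUnit_left (y := L.det) ?_
    rwa [← Matrix.det_mul, hLL]
  have hNdet : IsUnit N.det := (Matrix.isUnit_iff_isUnit_det N).mp hN
  have hNHdet : IsUnit Nᴴ.det := by rw [Matrix.det_conjTranspose]; exact hNdet.star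
  set T := L * M * N⁻¹ * L⁻¹ with hTdef
  have hnormP : ∀ y : Fin n → ℂ, normP P y = nrm (L *ᵥ y) := by
    intro y
    rw [normP, innerP, nrm]
    congr 2
    conv_rhs => rw [Matrix.star_mulVec, hLH]
    conv_lhs => rw [← hLL, ← Matrix.mulVec_mulVec, Matrix.dotProduct_mulVec]
  have hTLN : T * (L * N) = L * M := by
    rw [hTdef]
    calc L * M * N⁻¹ * L⁻¹ * (L * N) = L * M * N⁻¹ * (L⁻¹ * (L * N)) := by
          rw [Matrix.mul_assoc]
      _ = L * M * N⁻¹ * N := by rw [Matrix.nonsing_inv_mul_cancel_left _ _ hLdet]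
      _ = L * M := Matrix.nonsing_inv_mul_cancel_right _ _ hNdet
  have hfact2 : ∀ z : ℂ, (T - z • 1) * (L * N) = L * (M - z • N) := by
    intro z
    rw [Matrix.sub_mul, Matrix.smul_mul, one_mul, hTLN, Matrix.mul_sub, Matrix.mul_smul]
  have hPH : Pᴴ = P := hP.1
  have hMPN : Mᴴ * (P * N) = Nᴴ * P * M := by
    calc Mᴴ * (P * N) = (Nᴴ * P * M)ᴴ := by
          rw [Matrix.conjTranspose_mul, Matrix.conjTranspose_mul,
            Matrix.conjTranspose_conjTranspose, hPH]
      _ = Nᴴ * P * M := hsa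
  have e1 : Mᴴ * P = Nᴴ * P * M * N⁻¹ := by
    rw [← hMPN, Matrix.mul_assoc Mᴴ (P * N) N⁻¹, Matrix.mul_assoc P N N⁻¹,
      Matrix.mul_nonsing_inv _ hNdet, Matrix.mul_one]
  have key : (Nᴴ)⁻¹ * (Mᴴ * P) = P * M * N⁻¹ := by
    rw [e1]
    calc (Nᴴ)⁻¹ * (Nᴴ * P * M * N⁻¹) = (Nᴴ)⁻¹ * (Nᴴ * (P * M * N⁻¹)) := by
          simp only [Matrix.mul_assoc]
      _ = P * M * N⁻¹ := by
          rw [Matrix.nonsing_inv_mul_cancel_left _ _ hNHdet, Matrix.mul_assoc]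
  have hTH : T.IsHermitian := by
    show Tᴴ = T
    have hTc : Tᴴ = L⁻¹ * ((Nᴴ)⁻¹ * (Mᴴ * L)) := by
      rw [hTdef]
      simp only [Matrix.conjTranspose_mul, Matrix.conjTranspose_nonsing_inv, hLH,
        Matrix.mul_assoc]
    have e2 : Mᴴ * P * L⁻¹ = Mᴴ * L := by
      rw [← hLL, ← Matrix.mul_assoc, Matrix.mul_nonsing_inv_cancel_right _ _ hLdet]
    rw [hTc, ← e2, ← Matrix.mul_assoc (Nᴴ)⁻¹ (Mᴴ * P) L⁻¹, key]
    rw [← hLL, hTdef]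
    simp only [Matrix.mul_assoc]
    rw [Matrix.nonsing_inv_mul_cancel_left _ _ hLdet]
  -- eigenvalue bounds
  have hev : ∀ i, 0 ≤ hTH.eigenvalues i ∧ hTH.eigenvalues i ≤ lamn := by
    intro i
    have hdet0 : (T - ((hTH.eigenvalues i : ℝ) : ℂ) • 1).det = 0 := det_shift_eq_zero hTH i
    have hdetMN : (M - ((hTH.eigenvalues i : ℝ) : ℂ) • N).det = 0 := by
      have h := congrArg Matrix.det (hfact2 ((hTH.eigenvalues i : ℝ) : ℂ))
      rw [Matrix.det_mul, Matrix.det_mul, Matrix.det_mul, hdet0, zero_mul] at h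
      exact (mul_eq_zero.mp h.symm).resolve_left hLdet.ne_zero
    have hmem : ((hTH.eigenvalues i : ℝ) : ℂ) ∈ genSpec M N := hdetMN
    refine ⟨?_, hlamn.2 hmem⟩
    have h2 := (hpos _ hmem).2
    simpa using h2
  have hlamn0 : 0 ≤ lamn := by
    have h2 := (hpos _ hlamn.1).2
    simpa using h2
  -- nonvanishing
  have hNx : N *ᵥ x ≠ 0 := by
    intro h
    apply hx
    have h2 : N⁻¹ *ᵥ (N *ᵥ x) = x := by
      rw [Matrix.mulVec_mulVec, Matrix.nonsing_inv_mul _ hNdet, Matrix.one_mulVec]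
    rw [h, Matrix.mulVec_zero] at h2
    exact h2.symm
  set v := L *ᵥ (N *ᵥ x) with hvdef
  have hv0 : v ≠ 0 := by
    intro h
    apply hNx
    have h2 : L⁻¹ *ᵥ (L *ᵥ (N *ᵥ x)) = N *ᵥ x := by
      rw [Matrix.mulVec_mulVec, Matrix.nonsing_inv_mul _ hLdet, Matrix.one_mulVec]
    rw [← hvdef, h, Matrix.mulVec_zero] at h2
    exact h2.symm
  have hvLN : v = (L * N) *ᵥ x := by rw [hvdef, Matrix.mulVec_mulVec]
  have hmv : ∀ z : ℂ, L *ᵥ ((M - z • N) *ᵥ x) = (T - z • 1) *ᵥ v := by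
    intro z
    rw [Matrix.mulVec_mulVec, hvLN, Matrix.mulVec_mulVec, hfact2]
  set a := nrm v with hadef
  have ha : 0 < a := nrm_pos hv0
  set g : ℝ → ℝ := fun μ => nrm ((T - ((μ : ℝ) : ℂ) • 1) *ᵥ v) with hgdef
  have halg : ∀ μ : ℝ, alg2 M N P x μ = μ + g μ / a := by
    intro μ
    rw [alg2, hnormP, hnormP, hmv ((μ : ℝ) : ℂ)]
  have hg1 : ∀ μ : ℝ, 0 ≤ μ → 2 * μ ≤ lamn → g μ ≤ (lamn - μ) * a := by
    intro μ h0 h2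
    refine nrm_shift_le hTH (lamn - μ) μ (by linarith) (fun i => ?_) v
    rw [abs_le]
    constructor <;> [linarith [(hev i).1]; linarith [(hev i).2]]
  have hg2 : ∀ b c : ℝ, b ≤ c → g b ≤ g c + (c - b) * a := by
    intro b c hbc
    have h1 : ∀ r : ℝ, ((r : ℂ) • (1 : Matrix (Fin n) (Fin n) ℂ)) *ᵥ v = (r : ℂ) • v := by
      intro r
      rw [Matrix.smul_mulVec, Matrix.one_mulVec]
    have hsplit : (T - ((b : ℝ) : ℂ) • 1) *ᵥ v
        = (T - ((c : ℝ) : ℂ) • 1) *ᵥ v + ((c - b : ℝ) : ℂ) • v := by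
      rw [Matrix.sub_mulVec, Matrix.sub_mulVec, h1, h1]
      push_cast
      module
    calc g b = nrm ((T - ((c : ℝ) : ℂ) • 1) *ᵥ v + ((c - b : ℝ) : ℂ) • v) := by
          rw [hgdef]; simp only; rw [hsplit]
      _ ≤ nrm ((T - ((c : ℝ) : ℂ) • 1) *ᵥ v) + nrm (((c - b : ℝ) : ℂ) • v) := nrm_add_le _ _
      _ = g c + (c - b) * a := by
          rw [nrm_smul, abs_of_nonneg (sub_nonneg.mpr hbc)]
  have hM0 : normP P (M *ᵥ x) = g 0 := by
    have h := hmv 0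
    simp only [zero_smul, sub_zero] at h
    rw [hnormP, h, hgdef]
    simp
  have hμ0a : μ0 = g 0 / (2 * a) := by
    rw [hμ0, hM0, hnormP]
  have hg0 : g 0 = 2 * μ0 * a := by
    rw [hμ0a]
    field_simp
  have h2μ0 : 2 * μ0 ≤ lamn := by
    have h := hg1 0 le_rfl (by linarith)
    rw [hg0] at h
    have h2 : (2 * μ0) * a ≤ lamn * a := by rw [mul_assoc] at h ⊢; linarith
    exact le_of_mul_le_mul_right h2 ha
  have hμ0nonneg : 0 ≤ μ0 := by
    rw [hμ0a]
    exact div_nonneg (nrm_nonneg _) (by linarith)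
  have hgμ0 : μ0 * a ≤ g μ0 := by
    have h := hg2 0 μ0 hμ0nonneg
    rw [hg0] at h
    nlinarith
  have halg0 : alg2 M N P x μ0 ≤ lamn := by
    rw [halg]
    have h := hg1 μ0 hμ0nonneg h2μ0
    have h2 : g μ0 / a ≤ lamn - μ0 := by rw [div_le_iff₀ ha]; linarith
    linarith
  have hμ01 : μ0 ≤ μ1 := by
    rw [hμ1, halg]
    have h2 : μ0 ≤ g μ0 / a := by rw [le_div_iff₀ ha]; linarith
    linarith
  have hμ1nonneg : 0 ≤ μ1 := le_trans hμ0nonneg hμ01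
  have h2μ1 : 2 * μ1 ≤ lamn := by rw [hμ1]; linarith [halg0]
  have halg01 : alg2 M N P x μ0 ≤ alg2 M N P x μ1 := by
    rw [halg, halg]
    have h := hg2 μ0 μ1 hμ01
    have h2 : g μ0 / a ≤ (g μ1 + (μ1 - μ0) * a) / a := (div_le_div_iff_of_pos_right ha).mpr h
    rw [add_div, mul_div_assoc, div_self ha.ne', mul_one] at h2
    linarith
  have halg1 : alg2 M N P x μ1 ≤ lamn := by
    rw [halg]
    have h := hg1 μ1 hμ1nonneg h2μ1
    have h2 : g μ1 / a ≤ lamn - μ1 := by rw [div_le_iff₀ ha]; linarith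
    linarith
  have hqf : (qf M N P x ((μ0 : ℝ) : ℂ)).re ≤ alg2 M N P x μ0 := by
    rw [qf, alg2]
    set c := innerP P ((M - ((μ0 : ℝ) : ℂ) • N).mulVec x) (N.mulVec x) with hcdef
    set r := normP P ((M - ((μ0 : ℝ) : ℂ) • N).mulVec x) / normP P (N.mulVec x) with hrdef
    have hr : 0 ≤ r := by
      rw [hrdef]
      exact div_nonneg (Real.sqrt_nonneg _) (Real.sqrt_nonneg _)
    have hz : (c / ((‖c‖ : ℝ) : ℂ)).re ≤ 1 := by
      refine le_trans (Complex.re_le_norm _) ?_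
      rw [norm_div, Complex.norm_real, norm_norm]
      by_cases hc : ‖c‖ = 0
      · simp [hc]
      · rw [div_self hc]
    have hre : ((c / ((‖c‖ : ℝ) : ℂ)) * ((r : ℝ) : ℂ) + ((μ0 : ℝ) : ℂ)).re
        = (c / ((‖c‖ : ℝ) : ℂ)).re * r + μ0 := by
      simp [Complex.add_re, Complex.mul_re]
    rw [hre]
    have h2 : (c / ((‖c‖ : ℝ) : ℂ)).re * r ≤ 1 * r :=
      mul_le_mul_of_nonneg_right hz hr
    linarith
  exact ⟨hμ01, halg01, halg1, fun _ =>
    ⟨hqf, by linarith, by linarith [hqf, halg01]⟩⟩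
end
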